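/- If a non-elliptic self-embedding g of a tree T leaves a double ray invariant (setwise), then g is hyperbolic, i.e., it fixes exactly the two ends determined by that double ray and no other end. -/

import Mathlib

open SimpleGraph

variable {V : Type*}

/-- `g` is a self-embedding of `G`: injective and adjacency-preserving. -/
def IsEmb (G : SimpleGraph V) (g : V → V) : Prop :=
  Function.Injective g ∧ ∀ u v : V, G.Adj u v → G.Adj (g u) (g v)

/-- A ray in `G`: a one-way infinite path. -/
structure GRay (G : SimpleGraph V) where
  f : ℕ → V
  inj : Function.Injective f
  adj : ∀ n, G.Adj (f n) (f (n + 1))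

/-- Two rays are equivalent (lie in the same end): for every vertex `v` they have
tails avoiding `v` lying in the same component of `G − v`. -/
def RayEquiv (G : SimpleGraph V) (R S : GRay G) : Prop :=
  ∀ v : V, ∃ m n : ℕ, (∀ i, m ≤ i → R.f i ≠ v) ∧ (∀ j, n ≤ j → S.f j ≠ v) ∧
    ∃ w : G.Walk (R.f m) (S.f n), v ∉ w.support

/-- `g` fixes the end represented by the ray `R`: the image ray is equivalent to `R`. -/
def FixesEnd (G : SimpleGraph V) (g : V → V) (R : GRay G) : Prop :=
  ∃ S : GRay G, (∀ n, S.f n = g (R.f n)) ∧ RayEquiv G S R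

def FixesVertex (g : V → V) : Prop := ∃ v, g v = v

/-- `g` fixes an edge setwise (possibly swapping its endpoints). -/
def FixesEdge (G : SimpleGraph V) (g : V → V) : Prop :=
  ∃ u v : V, G.Adj u v ∧ ((g u = u ∧ g v = v) ∨ (g u = v ∧ g v = u))

/-- `g` fixes setwise a non-empty finite subtree of `G`. -/
def FixesFiniteSubtree (G : SimpleGraph V) (g : V → V) : Prop :=
  ∃ S : Set V, S.Nonempty ∧ S.Finite ∧ (G.induce S).Connected ∧ g '' S = S

/-- `R` is a ray with `g(R) ⊆ R`; for non-elliptic `g` its end is the direction `g⁺`. -/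
def DirectionRay (G : SimpleGraph V) (g : V → V) (R : GRay G) : Prop :=
  ∀ n, ∃ m, g (R.f n) = R.f m

/-- `w` lies in the component of `G − x` containing the end of `R`. -/
def InComp (G : SimpleGraph V) (x : V) (R : GRay G) (w : V) : Prop :=
  ∃ m, (∀ i, m ≤ i → R.f i ≠ x) ∧ ∃ p : G.Walk w (R.f m), x ∉ p.support

/-- A sequence of vertices converges to the end represented by `R`. -/
def ConvergesTo (G : SimpleGraph V) (x : ℕ → V) (R : GRay G) : Prop :=
  ∀ v : V, ∃ N : ℕ, ∀ n, N ≤ n → InComp G v R (x n)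

/-- `M` is a submonoid of `Emb(G)`. -/
def IsEmbMonoid (G : SimpleGraph V) (M : Set (V → V)) : Prop :=
  (∀ g ∈ M, IsEmb G g) ∧ (id ∈ M) ∧ ∀ g ∈ M, ∀ h ∈ M, (g ∘ h) ∈ M

/-- The end of `R` is an accumulation point of the orbit of `v0` under `M`:
every basic neighbourhood of the end of `R` meets the orbit. -/
def InLimitSet (G : SimpleGraph V) (M : Set (V → V)) (v0 : V) (R : GRay G) : Prop :=
  ∀ x : V, ∃ g ∈ M, InComp G x R (g v0)

/-- A self-embedding is elliptic if it fixes a non-empty finite subtree. -/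
def Elliptic (G : SimpleGraph V) (g : V → V) : Prop := FixesFiniteSubtree G g

/-- `g` is hyperbolic: not elliptic and it fixes exactly two ends. -/
def Hyperbolic (G : SimpleGraph V) (g : V → V) : Prop :=
  ¬ Elliptic G g ∧ ∃ R1 R2 : GRay G, ¬ RayEquiv G R1 R2 ∧
    FixesEnd G g R1 ∧ FixesEnd G g R2 ∧
    ∀ S : GRay G, FixesEnd G g S → RayEquiv G S R1 ∨ RayEquiv G S R2

/-- `g` is parabolic: not elliptic and it fixes exactly one end. -/
def Parabolic (G : SimpleGraph V) (g : V → V) : Prop :=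
  ¬ Elliptic G g ∧ ∃ R : GRay G, FixesEnd G g R ∧
    ∀ S : GRay G, FixesEnd G g S → RayEquiv G S R

namespace TreeAux

variable {V : Type*} {G : SimpleGraph V}

lemma isPath_append {u v w : V} {p : G.Walk u v} {q : G.Walk v w}
    (hp : p.IsPath) (hq : q.IsPath)
    (h : ∀ z, z ∈ p.support → z ∈ q.support → z = v) : (p.append q).IsPath := by
  rw [Walk.isPath_def, Walk.support_append]
  have hq' := (Walk.isPath_def q).1 hq
  rw [Walk.support_eq_cons, List.nodup_cons] at hq'
  refine List.Nodup.append ((Walk.isPath_def p).1 hp) hq'.2 ?_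
  intro z hz hz'
  have : z = v := h z hz (by rw [Walk.support_eq_cons]; exact List.mem_cons_of_mem _ hz')
  subst this
  exact hq'.1 hz'

/-- walk along a chain -/
def chainWalk (f : ℕ → V) (hf : ∀ n, G.Adj (f n) (f (n + 1))) : (k : ℕ) → G.Walk (f 0) (f k)
  | 0 => Walk.nil
  | (k + 1) => (chainWalk f hf k).concat (hf k)

lemma chainWalk_support (f : ℕ → V) (hf : ∀ n, G.Adj (f n) (f (n + 1))) (k : ℕ) :
    ∀ z, z ∈ (chainWalk (G := G) f hf k).support ↔ ∃ i ≤ k, z = f i := by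
  induction k with
  | zero =>
    intro z
    constructor
    · intro h; simp [chainWalk] at h; exact ⟨0, le_refl _, h⟩
    · rintro ⟨i, hi, rfl⟩; interval_cases i; simp [chainWalk]
  | succ k ih =>
    intro z
    rw [chainWalk, Walk.support_concat, List.mem_append, List.mem_singleton]
    constructor
    · rintro (h | h)
      · obtain ⟨i, hi, rfl⟩ := (ih z).1 h; exact ⟨i, by omega, rfl⟩
      · exact ⟨k + 1, le_refl _, h⟩
    · rintro ⟨i, hi, rfl⟩
      rcases Nat.lt_or_ge i (k + 1) with h | h
      · exact Or.inl ((ih _).2 ⟨i, by omega, rfl⟩)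
      · have : i = k + 1 := by omega
        subst this; exact Or.inr rfl

lemma chainWalk_length (f : ℕ → V) (hf : ∀ n, G.Adj (f n) (f (n + 1))) (k : ℕ) :
    (chainWalk (G := G) f hf k).length = k := by
  induction k with
  | zero => rfl
  | succ k ih => rw [chainWalk, Walk.length_concat, ih]

lemma chainWalk_isPath (f : ℕ → V) (hf : ∀ n, G.Adj (f n) (f (n + 1))) (k : ℕ)
    (hinj : ∀ i j, i ≤ k → j ≤ k → f i = f j → i = j) :
    (chainWalk (G := G) f hf k).IsPath := by
  induction k with
  | zero => exact Walk.IsPath.nil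
  | succ k ih =>
    rw [chainWalk, Walk.concat_eq_append]
    refine isPath_append (ih (fun i j hi hj => hinj i j (by omega) (by omega))) ?_ ?_
    · rw [Walk.isPath_def]
      simp only [Walk.support_cons, Walk.support_nil]
      refine List.nodup_cons.2 ⟨?_, List.nodup_singleton _⟩
      simp only [List.mem_singleton]
      intro h
      have := hinj k (k + 1) (by omega) (le_refl _) h
      omega
    · intro z hz hz'
      obtain ⟨i, hi, rfl⟩ := (chainWalk_support f hf k z).1 hz
      simp only [Walk.support_cons, Walk.support_nil, List.mem_cons, List.mem_singleton] at hz'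
      rcases hz' with h | h
      · exact h
      · simp only [List.mem_singleton, List.not_mem_nil, or_false] at h
        have := hinj i (k + 1) (by omega) (le_refl _) h
        omega

end TreeAux

namespace TreeAux2
open TreeAux

variable {V : Type*} {G : SimpleGraph V} (hT : G.IsTree)

/-- the unique path between two vertices of a tree -/
noncomputable def tpath (u v : V) : G.Walk u v := (hT.existsUnique_path u v).choose

lemma tpath_isPath (u v : V) : (tpath hT u v).IsPath :=
  (hT.existsUnique_path u v).choose_spec.1

lemma tpath_unique {u v : V} (p : G.Walk u v) (hp : p.IsPath) : p = tpath hT u v :=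
  (hT.existsUnique_path u v).choose_spec.2 p hp

lemma tpath_support_subset {u v : V} (w : G.Walk u v) :
    (tpath hT u v).support ⊆ w.support := by
  classical
  have h : w.bypass = tpath hT u v := tpath_unique hT w.bypass (Walk.bypass_isPath w)
  rw [← h]
  exact Walk.support_bypass_subset w

end TreeAux2

namespace TreeAux3
open TreeAux TreeAux2

variable {V : Type*} {G : SimpleGraph V} {d : ℤ → V}

/-- walk along the double ray from `d a` to `d b` -/
noncomputable def ddpath (hdadj : ∀ n : ℤ, G.Adj (d n) (d (n + 1))) (a b : ℤ) :
    G.Walk (d a) (d b) :=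
  if hab : a ≤ b then
    (chainWalk (fun i : ℕ => d (a + i))
      (fun n => by
        rw [show (a + ((n : ℕ) + 1 : ℕ) : ℤ) = (a + n) + 1 by push_cast; ring]
        exact hdadj (a + n)) ((b - a).toNat)).copy (by norm_num) (by congr 1; omega)
  else
    ((chainWalk (fun i : ℕ => d (b + i))
      (fun n => by
        rw [show (b + ((n : ℕ) + 1 : ℕ) : ℤ) = (b + n) + 1 by push_cast; ring]
        exact hdadj (b + n)) ((a - b).toNat)).copy (by norm_num) (by congr 1; omega)).reverse

lemma ddpath_support (hdadj : ∀ n : ℤ, G.Adj (d n) (d (n + 1))) (a b : ℤ) (z : V) :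
    z ∈ (ddpath hdadj a b).support ↔ ∃ i : ℤ, min a b ≤ i ∧ i ≤ max a b ∧ z = d i := by
  unfold ddpath
  split_ifs with hab
  · rw [Walk.support_copy, chainWalk_support]
    constructor
    · rintro ⟨i, hi, rfl⟩
      exact ⟨a + i, by omega, by omega, rfl⟩
    · rintro ⟨i, h1, h2, rfl⟩
      exact ⟨(i - a).toNat, by omega, by congr 1; omega⟩
  · rw [Walk.support_reverse, List.mem_reverse, Walk.support_copy, chainWalk_support]
    constructor
    · rintro ⟨i, hi, rfl⟩
      exact ⟨b + i, by omega, by omega, rfl⟩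
    · rintro ⟨i, h1, h2, rfl⟩
      exact ⟨(i - b).toNat, by omega, by congr 1; omega⟩

lemma ddpath_isPath (hdinj : Function.Injective d)
    (hdadj : ∀ n : ℤ, G.Adj (d n) (d (n + 1))) (a b : ℤ) :
    (ddpath hdadj a b).IsPath := by
  unfold ddpath
  split_ifs with hab
  · rw [Walk.isPath_def, Walk.support_copy, ← Walk.isPath_def]
    refine chainWalk_isPath _ _ _ (fun i j hi hj h => ?_)
    have := hdinj h
    omega
  · rw [Walk.isPath_reverse_iff, Walk.isPath_def, Walk.support_copy, ← Walk.isPath_def]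
    refine chainWalk_isPath _ _ _ (fun i j hi hj h => ?_)
    have := hdinj h
    omega

lemma ddpath_length (hdadj : ∀ n : ℤ, G.Adj (d n) (d (n + 1))) (a b : ℤ) :
    (ddpath hdadj a b).length = (max a b - min a b).toNat := by
  unfold ddpath
  split_ifs with hab
  · rw [Walk.length_copy, chainWalk_length]; congr 1; omega
  · rw [Walk.length_reverse, Walk.length_copy, chainWalk_length]; congr 1; omega

/-- adjacency on the double ray has consecutive indices -/
lemma adj_consec (hT : G.IsTree) (hdinj : Function.Injective d)
    (hdadj : ∀ n : ℤ, G.Adj (d n) (d (n + 1))) {i j : ℤ} (h : G.Adj (d i) (d j)) :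
    j = i + 1 ∨ j = i - 1 := by
  have hne : i ≠ j := fun hij => h.ne (congrArg d hij)
  have hedge : (Walk.cons h Walk.nil).IsPath := by
    rw [Walk.isPath_def]
    simp [hdinj.ne hne]
  have h1 : (Walk.cons h Walk.nil) = tpath hT (d i) (d j) := tpath_unique hT _ hedge
  have h2 : ddpath hdadj i j = tpath hT (d i) (d j) := tpath_unique hT _ (ddpath_isPath hdinj hdadj i j)
  have hlen : (Walk.cons h Walk.nil).length = (ddpath hdadj i j).length := by rw [h1, h2]
  rw [ddpath_length] at hlen
  simp only [Walk.length_cons, Walk.length_nil] at hlen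
  omega

end TreeAux3

namespace TreeAux4
open TreeAux TreeAux2 TreeAux3

variable {V : Type*} {G : SimpleGraph V} {d : ℤ → V}

/-- a gate path for x: a path from x to the double ray meeting it only at the endpoint -/
def IsGatePath (d : ℤ → V) {x : V} {t : ℤ} (p : G.Walk x (d t)) : Prop :=
  p.IsPath ∧ ∀ z ∈ p.support, z ∈ Set.range d → z = d t

lemma gate_exists_of_walk : ∀ {x y : V} (w : G.Walk x y), y ∈ Set.range d →
    ∃ (t : ℤ) (p : G.Walk x (d t)), IsGatePath d p := by
  classical
  intro x y w
  induction w with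
  | nil =>
    intro hy
    obtain ⟨t, rfl⟩ := hy
    exact ⟨t, Walk.nil, Walk.IsPath.nil, by simp⟩
  | @cons a b c hadj w ih =>
    intro hy
    by_cases hx : a ∈ Set.range d
    · obtain ⟨t, rfl⟩ := hx
      exact ⟨t, Walk.nil, Walk.IsPath.nil, by simp⟩
    · obtain ⟨t, p, hp, hD⟩ := ih hy
      refine ⟨t, (Walk.cons hadj p).bypass, Walk.bypass_isPath _, ?_⟩
      intro z hz hzD
      have hz' := Walk.support_bypass_subset _ hz
      rw [Walk.support_cons, List.mem_cons] at hz'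
      rcases hz' with rfl | hz'
      · exact absurd hzD hx
      · exact hD z hz' hzD

lemma gate_exists (hT : G.IsTree) (d : ℤ → V) (x : V) :
    ∃ (t : ℤ) (p : G.Walk x (d t)), IsGatePath d p :=
  gate_exists_of_walk (tpath hT x (d 0)) ⟨0, rfl⟩

/-- the index of the gate of x on the double ray -/
noncomputable def gate (hT : G.IsTree) (d : ℤ → V) (x : V) : ℤ :=
  (gate_exists hT d x).choose

noncomputable def gpath (hT : G.IsTree) (d : ℤ → V) (x : V) : G.Walk x (d (gate hT d x)) :=
  (gate_exists hT d x).choose_spec.choose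

lemma gpath_isGatePath (hT : G.IsTree) (d : ℤ → V) (x : V) : IsGatePath d (gpath hT d x) :=
  (gate_exists hT d x).choose_spec.choose_spec

variable (hT : G.IsTree) (hdinj : Function.Injective d)
  (hdadj : ∀ n : ℤ, G.Adj (d n) (d (n + 1)))

include hT hdinj hdadj

/-- uniqueness of the gate, for gate paths -/
lemma gate_unique_path {x : V} {t : ℤ} {p : G.Walk x (d t)} (hp : IsGatePath d p) :
    t = gate hT d x := by
  set t' := gate hT d x with ht'
  have hq' := gpath_isGatePath hT d x
  have hjun : ∀ z, z ∈ p.support → z ∈ (ddpath hdadj t t').support → z = d t := by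
    intro z hz hz'
    obtain ⟨i, _, _, rfl⟩ := (ddpath_support hdadj t t' z).1 hz'
    exact hp.2 _ hz ⟨i, rfl⟩
  have hpath : (p.append (ddpath hdadj t t')).IsPath :=
    isPath_append hp.1 (ddpath_isPath hdinj hdadj t t') hjun
  have heq : p.append (ddpath hdadj t t') = tpath hT x (d t') := tpath_unique hT _ hpath
  have heq2 : gpath hT d x = tpath hT x (d t') := tpath_unique hT _ hq'.1
  have hmem : d t ∈ (gpath hT d x).support := by
    rw [heq2, ← heq]
    exact (Walk.mem_support_append_iff _ _).2 (Or.inl (Walk.end_mem_support p))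
  exact hdinj (hq'.2 _ hmem ⟨t, rfl⟩)

/-- uniqueness of the gate, for mere walks meeting the ray only at the end -/
lemma gate_unique_walk {x : V} {t : ℤ} (p : G.Walk x (d t))
    (hD : ∀ z ∈ p.support, z ∈ Set.range d → z = d t) : t = gate hT d x := by
  classical
  refine gate_unique_path hT hdinj hdadj (p := p.bypass) ⟨Walk.bypass_isPath _, ?_⟩
  intro z hz hzD
  exact hD z (Walk.support_bypass_subset _ hz) hzD

lemma gate_d (s : ℤ) : gate hT d (d s) = s :=
  (gate_unique_walk hT hdinj hdadj (Walk.nil) (by simp)).symm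

/-- separation: if gates differ, `d (gate x)` lies on the unique path from x to y -/
lemma mem_tpath_of_gate_ne {x y : V} (h : gate hT d x ≠ gate hT d y) :
    d (gate hT d x) ∈ (tpath hT x y).support := by
  set tx := gate hT d x with htx
  set ty := gate hT d y with hty
  have hjun : ∀ z, z ∈ (gpath hT d x).support → z ∈ (ddpath hdadj tx ty).support → z = d tx := by
    intro z hz hz'
    obtain ⟨i, _, _, rfl⟩ := (ddpath_support hdadj tx ty z).1 hz'
    exact (gpath_isGatePath hT d x).2 _ hz ⟨i, rfl⟩
  have hpath : ((gpath hT d x).append (ddpath hdadj tx ty)).IsPath :=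
    isPath_append (gpath_isGatePath hT d x).1 (ddpath_isPath hdinj hdadj tx ty) hjun
  have heq : (gpath hT d x).append (ddpath hdadj tx ty) = tpath hT x (d ty) :=
    tpath_unique hT _ hpath
  have hmem : d tx ∈ (tpath hT x (d ty)).support := by
    rw [← heq]
    exact (Walk.mem_support_append_iff _ _).2 (Or.inl (Walk.end_mem_support _))
  have hsub : (tpath hT x (d ty)).support ⊆ ((tpath hT x y).append (gpath hT d y)).support :=
    tpath_support_subset hT _
  have hm := hsub hmem
  rw [Walk.mem_support_append_iff] at hm
  rcases hm with h1 | h1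
  · exact h1
  · exact absurd (hdinj ((gpath_isGatePath hT d y).2 _ h1 ⟨tx, rfl⟩)) h

/-- if x is adjacent to y then either gates agree or both are on the ray -/
lemma gate_adj {x y : V} (hadj : G.Adj x y) :
    gate hT d x = gate hT d y ∨
      (x = d (gate hT d x) ∧ y = d (gate hT d y)) := by
  classical
  by_cases hx : x ∈ Set.range d
  · by_cases hy : y ∈ Set.range d
    · obtain ⟨s, rfl⟩ := hx; obtain ⟨s', rfl⟩ := hy
      right
      rw [gate_d hT hdinj hdadj, gate_d hT hdinj hdadj]
      exact ⟨rfl, rfl⟩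
    · left
      have hD : ∀ z ∈ (Walk.cons hadj.symm (gpath hT d x)).support, z ∈ Set.range d →
          z = d (gate hT d x) := by
        intro z hz hzD
        rw [Walk.support_cons, List.mem_cons] at hz
        rcases hz with rfl | hz
        · exact absurd hzD hy
        · exact (gpath_isGatePath hT d x).2 _ hz hzD
      exact (gate_unique_walk hT hdinj hdadj _ hD)
  · left
    have hD : ∀ z ∈ (Walk.cons hadj (gpath hT d y)).support, z ∈ Set.range d →
        z = d (gate hT d y) := by
      intro z hz hzD
      rw [Walk.support_cons, List.mem_cons] at hz
      rcases hz with rfl | hz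
      · exact absurd hzD hx
      · exact (gpath_isGatePath hT d y).2 _ hz hzD
    exact (gate_unique_walk hT hdinj hdadj _ hD).symm

/-- membership in the gate path determines the gate -/
lemma gate_of_mem_gpath {x v : V} (hv : v ∈ (gpath hT d x).support) :
    gate hT d v = gate hT d x := by
  classical
  have hq := gpath_isGatePath hT d x
  refine (gate_unique_walk hT hdinj hdadj ((gpath hT d x).dropUntil v hv) ?_).symm
  intro z hz hzD
  exact hq.2 _ (Walk.support_dropUntil_subset _ hv hz) hzD

end TreeAux4

namespace TreeAux5

/-- an injective map on ℤ taking ±1-steps is a translation or a reflection -/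
lemma int_rigid (σ : ℤ → ℤ) (hinj : Function.Injective σ)
    (hstep : ∀ n, σ (n + 1) = σ n + 1 ∨ σ (n + 1) = σ n - 1) :
    (∀ n, σ n = n + σ 0) ∨ (∀ n, σ n = σ 0 - n) := by
  have hconsec : ∀ n : ℤ, σ (n + 1) - σ n = σ (n + 2) - σ (n + 1) := by
    intro n
    rcases hstep n with h1 | h1 <;> rcases hstep (n + 1) with h2 | h2 <;>
      rw [show n + 1 + 1 = n + 2 by ring] at h2
    · omega
    · exfalso; have heq : σ (n + 2) = σ n := by omega
      have := hinj heq; omega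
    · exfalso; have heq : σ (n + 2) = σ n := by omega
      have := hinj heq; omega
    · omega
  set e := σ 1 - σ 0 with he
  have hs : ∀ n : ℤ, σ (n + 1) - σ n = e := by
    intro n
    induction n using Int.induction_on with
    | zero => norm_num [he]
    | succ k ih =>
      have h := hconsec k
      rw [show (k : ℤ) + 1 + 1 = k + 2 by ring]
      omega
    | pred k ih =>
      have h := hconsec (-(k : ℤ) - 1)
      rw [show (-(k : ℤ) - 1) + 1 = -k by ring, show (-(k : ℤ) - 1) + 2 = -k + 1 by ring] at h
      rw [show (-(k : ℤ) - 1) + 1 = -k by ring]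
      omega
  have hgen : ∀ n : ℤ, σ n = σ 0 + n * e := by
    intro n
    induction n using Int.induction_on with
    | zero => ring
    | succ k ih =>
      have h := hs k
      have hr : ((k : ℤ) + 1) * e = (k : ℤ) * e + e := by ring
      linarith
    | pred k ih =>
      have h := hs (-(k : ℤ) - 1)
      rw [show (-(k : ℤ) - 1) + 1 = -k by ring] at h
      have hr : (-(k : ℤ) - 1) * e = -(k : ℤ) * e - e := by ring
      linarith
  have h0 := hs 0
  rw [show (0 : ℤ) + 1 = 1 by ring] at h0
  rcases hstep 0 with h1 | h1 <;> rw [show (0 : ℤ) + 1 = 1 by ring] at h1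
  · left
    intro n
    have := hgen n
    have hee : e = 1 := by omega
    rw [hee] at this
    omega
  · right
    intro n
    have := hgen n
    have hee : e = -1 := by omega
    rw [hee] at this
    omega

end TreeAux5

namespace TreeAux6
open SimpleGraph

variable {V : Type*} {G : SimpleGraph V}

lemma elliptic_of_fixed_vertex {g : V → V} {v : V} (hgv : g v = v) :
    FixesFiniteSubtree G g := by
  refine ⟨{v}, ⟨v, rfl⟩, Set.finite_singleton v, ?_, by rw [Set.image_singleton, hgv]⟩
  haveI : Nonempty ({v} : Set V) := ⟨⟨v, rfl⟩⟩
  refine ⟨?_⟩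
  · intro a b
    have : a = b := by
      rcases a with ⟨a, ha⟩; rcases b with ⟨b, hb⟩
      simp only [Set.mem_singleton_iff] at ha hb
      subst ha; subst hb; rfl
    rw [this]

lemma elliptic_of_swapped_edge {g : V → V} {u v : V} (huv : G.Adj u v)
    (h1 : g u = v) (h2 : g v = u) : FixesFiniteSubtree G g := by
  refine ⟨{u, v}, ⟨u, Or.inl rfl⟩, (Set.finite_singleton u).insert v |>.subset ?_, ?_, ?_⟩
  · intro z hz; rcases hz with rfl | rfl
    · exact Or.inr rfl
    · exact Or.inl rfl
  · haveI : Nonempty ({u, v} : Set V) := ⟨⟨u, Or.inl rfl⟩⟩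
    refine ⟨?_⟩
    · intro a b
      have hadj : ∀ (x y : ({u, v} : Set V)), (x : V) = u → (y : V) = v →
          (G.induce {u, v}).Adj x y := by
        intro x y hx hy
        simp only [comap_adj, Function.Embedding.coe_subtype] at *
        rw [hx, hy]
        exact huv
      rcases a with ⟨a, ha⟩; rcases b with ⟨b, hb⟩
      rcases ha with rfl | ha <;> rcases hb with rfl | hb
      · rfl
      · rw [Set.mem_singleton_iff] at hb; subst hb
        exact (hadj _ _ rfl rfl).reachable
      · rw [Set.mem_singleton_iff] at ha; subst ha
        exact (hadj _ _ rfl rfl).reachable.symm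
      · rw [Set.mem_singleton_iff] at ha hb; subst ha; subst hb; rfl
  · rw [Set.image_pair, h1, h2, Set.pair_comm]

end TreeAux6


open TreeAux TreeAux2 TreeAux3 TreeAux4 TreeAux5 TreeAux6 SimpleGraph.Walk

theorem stmt5 (G : SimpleGraph V) (hT : G.IsTree) (g : V → V) (hg : IsEmb G g)
    (hne : ¬ Elliptic G g)
    (d : ℤ → V) (hdinj : Function.Injective d) (hdadj : ∀ n : ℤ, G.Adj (d n) (d (n + 1)))
    (hinv : g '' Set.range d = Set.range d)
    (Rp Rm : GRay G) (hRp : ∀ n : ℕ, Rp.f n = d (n : ℤ)) (hRm : ∀ n : ℕ, Rm.f n = d (-(n : ℤ))) :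
    ¬ RayEquiv G Rp Rm ∧ FixesEnd G g Rp ∧ FixesEnd G g Rm ∧
      ∀ S : GRay G, FixesEnd G g S → RayEquiv G S Rp ∨ RayEquiv G S Rm := by
  classical
  obtain ⟨hginj, hgadj⟩ := hg
  -- the induced map on the indices of the double ray
  have hgd : ∀ n : ℤ, ∃ m : ℤ, g (d n) = d m := by
    intro n
    have h1 : g (d n) ∈ g '' Set.range d := ⟨d n, ⟨n, rfl⟩, rfl⟩
    rw [hinv] at h1
    obtain ⟨m, hm⟩ := h1
    exact ⟨m, hm.symm⟩
  choose σ hσ using hgd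
  have hσinj : Function.Injective σ := by
    intro a b hab
    have h : g (d a) = g (d b) := by rw [hσ, hσ, hab]
    exact hdinj (hginj h)
  have hσstep : ∀ n, σ (n + 1) = σ n + 1 ∨ σ (n + 1) = σ n - 1 := by
    intro n
    have h := hgadj _ _ (hdadj n)
    rw [hσ, hσ] at h
    exact adj_consec hT hdinj hdadj h
  rcases int_rigid σ hσinj hσstep with htr | href
  swap
  · -- reflection case: g is elliptic, contradiction
    exfalso
    apply hne
    rcases Int.even_or_odd (σ 0) with ⟨k, hk⟩ | ⟨k, hk⟩
    · refine elliptic_of_fixed_vertex (v := d k) ?_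
      rw [hσ, href, hk]; congr 1; ring
    · refine elliptic_of_swapped_edge (hdadj k) ?_ ?_
      · rw [hσ, href, hk]; congr 1; ring
      · rw [hσ, href, hk]; congr 1; ring
  set c := σ 0 with hcdef
  have hgdc : ∀ n : ℤ, g (d n) = d (n + c) := fun n => by rw [hσ, htr]
  have hc0 : c ≠ 0 := by
    intro h
    apply hne
    refine elliptic_of_fixed_vertex (v := d 0) ?_
    rw [hgdc, h]; norm_num
  -- off-ray vertices stay off the ray
  have hoff : ∀ x : V, x ∉ Set.range d → g x ∉ Set.range d := by
    rintro x hx ⟨m, hm⟩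
    have h2 : g (d (m - c)) = d m := by rw [hgdc]; congr 1; ring
    exact hx ⟨m - c, hginj (h2.trans hm)⟩
  -- gates of images
  have hgate_g : ∀ x : V, gate hT d (g x) = gate hT d x + c := by
    intro x
    set fG : G →g G := ⟨g, fun h => hgadj _ _ h⟩ with hfG
    have hend : fG (d (gate hT d x)) = d (gate hT d x + c) := hgdc _
    refine (gate_unique_walk hT hdinj hdadj (((gpath hT d x).map fG).copy rfl hend) ?_).symm
    intro z hz hzD
    rw [Walk.support_copy, Walk.support_map] at hz
    obtain ⟨u, hu, rfl⟩ := List.mem_map.1 hz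
    have huD : u ∈ Set.range d := by
      by_contra huD
      exact hoff u huD hzD
    have := (gpath_isGatePath hT d x).2 u hu huD
    rw [this]
    exact hgdc _
  -- tails of rays avoid any fixed vertex
  have htail : ∀ (R : GRay G) (v : V), ∃ N : ℕ, ∀ i, N ≤ i → R.f i ≠ v := by
    intro R v
    by_cases h : ∃ k, R.f k = v
    · obtain ⟨k, hk⟩ := h
      refine ⟨k + 1, fun i hi hiv => ?_⟩
      have := R.inj (hiv.trans hk.symm)
      omega
    · push_neg at h
      exact ⟨0, fun i _ => h i⟩
  refine ⟨?_, ?_, ?_, ?_⟩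
  · -- the two ends of the double ray are distinct
    intro h
    obtain ⟨m, n, h1, h2, w, hw⟩ := h (d 0)
    have hm1 : 1 ≤ m := by
      by_contra h'
      have hm0 : m = 0 := by omega
      subst hm0
      refine h1 0 le_rfl ?_
      rw [hRp 0]; norm_num
    have hn1 : 1 ≤ n := by
      by_contra h'
      have hn0 : n = 0 := by omega
      subst hn0
      refine h2 0 le_rfl ?_
      rw [hRm 0]; norm_num
    have hmem : d 0 ∈ (tpath hT (d (m : ℤ)) (d (-(n : ℤ)))).support := by
      rw [← tpath_unique hT _ (ddpath_isPath hdinj hdadj (m : ℤ) (-(n : ℤ)))]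
      refine (ddpath_support hdadj _ _ _).2 ⟨0, ?_, ?_, rfl⟩
      · omega
      · omega
    have hsub := tpath_support_subset hT (w.copy (hRp m) (hRm n)) hmem
    rw [Walk.support_copy] at hsub
    exact hw hsub
  · -- g fixes the end of Rp
    refine ⟨⟨fun n => d ((n : ℤ) + c), ?_, ?_⟩, ?_, ?_⟩
    · intro a b hab
      have := hdinj hab
      omega
    · intro n
      have h := hdadj ((n : ℤ) + c)
      rw [show ((n : ℤ) + c) + 1 = ((n + 1 : ℕ) : ℤ) + c by push_cast; ring] at h
      exact h
    · intro n
      simp only []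
      rw [hRp n, hgdc]
    · intro v
      by_cases hv : v ∈ Set.range d
      · obtain ⟨i, rfl⟩ := hv
        set M : ℕ := (max (i + 1) (i + 1 - c)).toNat with hM
        have hM1 : i + 1 ≤ (M : ℤ) := le_trans (le_max_left _ _) (Int.self_le_toNat _)
        have hM2 : i + 1 - c ≤ (M : ℤ) := le_trans (le_max_right _ _) (Int.self_le_toNat _)
        refine ⟨M, M, ?_, ?_, ?_⟩
        · intro j hj hjv
          simp only [] at hjv
          have hji := hdinj hjv
          have hj' : (M : ℤ) ≤ (j : ℤ) := by exact_mod_cast hj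
          omega
        · intro j hj hjv
          rw [hRp j] at hjv
          have hji := hdinj hjv
          have hj' : (M : ℤ) ≤ (j : ℤ) := by exact_mod_cast hj
          omega
        · refine ⟨(ddpath hdadj ((M : ℤ) + c) (M : ℤ)).copy rfl (hRp M).symm, ?_⟩
          intro hmem
          rw [Walk.support_copy] at hmem
          obtain ⟨idx, hlo, hhi, heq⟩ := (ddpath_support hdadj _ _ _).1 hmem
          have := hdinj heq
          have hmin : i + 1 ≤ min ((M : ℤ) + c) (M : ℤ) := le_min (by omega) (by omega)
          omega
      · refine ⟨0, 0, ?_, ?_, ?_⟩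
        · intro j _ hjv
          exact hv (hjv ▸ ⟨(j : ℤ) + c, rfl⟩)
        · intro j _ hjv
          refine hv ?_
          rw [← hjv, hRp j]
          exact ⟨j, rfl⟩
        · refine ⟨(ddpath hdadj (((0 : ℕ) : ℤ) + c) ((0 : ℕ) : ℤ)).copy rfl (hRp 0).symm, ?_⟩
          intro hmem
          rw [Walk.support_copy] at hmem
          obtain ⟨idx, _, _, heq⟩ := (ddpath_support hdadj _ _ _).1 hmem
          exact hv (heq ▸ ⟨idx, rfl⟩)
  · -- g fixes the end of Rm
    refine ⟨⟨fun n => d (-(n : ℤ) + c), ?_, ?_⟩, ?_, ?_⟩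
    · intro a b hab
      have := hdinj hab
      omega
    · intro n
      have h := (hdadj (-((n + 1 : ℕ) : ℤ) + c)).symm
      rw [show (-((n + 1 : ℕ) : ℤ) + c) + 1 = -(n : ℤ) + c by push_cast; ring] at h
      exact h
    · intro n
      simp only []
      rw [hRm n, hgdc]
    · intro v
      by_cases hv : v ∈ Set.range d
      · obtain ⟨i, rfl⟩ := hv
        set M : ℕ := (max (c - i + 1) (1 - i)).toNat with hM
        have hM1 : c - i + 1 ≤ (M : ℤ) := le_trans (le_max_left _ _) (Int.self_le_toNat _)
        have hM2 : 1 - i ≤ (M : ℤ) := le_trans (le_max_right _ _) (Int.self_le_toNat _)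
        refine ⟨M, M, ?_, ?_, ?_⟩
        · intro j hj hjv
          simp only [] at hjv
          have hji := hdinj hjv
          have hj' : (M : ℤ) ≤ (j : ℤ) := by exact_mod_cast hj
          omega
        · intro j hj hjv
          rw [hRm j] at hjv
          have hji := hdinj hjv
          have hj' : (M : ℤ) ≤ (j : ℤ) := by exact_mod_cast hj
          omega
        · refine ⟨(ddpath hdadj (-((M : ℕ) : ℤ) + c) (-((M : ℕ) : ℤ))).copy rfl (hRm M).symm, ?_⟩
          intro hmem
          rw [Walk.support_copy] at hmem
          obtain ⟨idx, hlo, hhi, heq⟩ := (ddpath_support hdadj _ _ _).1 hmem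
          have := hdinj heq
          have hmax : max (-((M : ℕ) : ℤ) + c) (-((M : ℕ) : ℤ)) ≤ i - 1 := max_le (by omega) (by omega)
          omega
      · refine ⟨0, 0, ?_, ?_, ?_⟩
        · intro j _ hjv
          exact hv (hjv ▸ ⟨-(j : ℤ) + c, rfl⟩)
        · intro j _ hjv
          refine hv ?_
          rw [← hjv, hRm j]
          exact ⟨-(j : ℤ), rfl⟩
        · refine ⟨(ddpath hdadj (-((0 : ℕ) : ℤ) + c) (-((0 : ℕ) : ℤ))).copy rfl (hRm 0).symm, ?_⟩
          intro hmem
          rw [Walk.support_copy] at hmem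
          obtain ⟨idx, _, _, heq⟩ := (ddpath_support hdadj _ _ _).1 hmem
          exact hv (heq ▸ ⟨idx, rfl⟩)
  · -- every fixed end is one of the two ends of the double ray
    intro S hS
    obtain ⟨S', hS'f, hS'equiv⟩ := hS
    set t : ℕ → ℤ := fun n => gate hT d (S.f n) with ht
    by_cases hA : ∀ K : ℤ, ∀ N : ℕ, ∃ m, N ≤ m ∧ K ≤ t m
    · -- gates have limsup +∞ : S converges to the end of Rp
      left
      intro v
      set B := gate hT d v with hB
      obtain ⟨N₁, hN₁⟩ := htail S v
      obtain ⟨m, hm, hmB⟩ := hA (B + 1) N₁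
      set n : ℕ := (max (t m) (B + 1)).toNat with hn
      have hn1 : t m ≤ (n : ℤ) := le_trans (le_max_left _ _) (Int.self_le_toNat _)
      have hn2 : B + 1 ≤ (n : ℤ) := le_trans (le_max_right _ _) (Int.self_le_toNat _)
      refine ⟨m, n, fun i hi => hN₁ i (le_trans hm hi), ?_, ?_⟩
      · intro j hj hjv
        rw [hRp j] at hjv
        have hgv : B = (j : ℤ) := by rw [hB, ← hjv, gate_d hT hdinj hdadj]
        have hj' : (n : ℤ) ≤ (j : ℤ) := by exact_mod_cast hj
        omega
      · refine ⟨((gpath hT d (S.f m)).append (ddpath hdadj (t m) ((n : ℕ) : ℤ))).copy rfl (hRp n).symm, ?_⟩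
        rw [Walk.support_copy, Walk.mem_support_append_iff]
        rintro (hmem | hmem)
        · have hgv := gate_of_mem_gpath hT hdinj hdadj hmem
          rw [← hB] at hgv
          have hgv2 : B = t m := hgv
          omega
        · obtain ⟨idx, hlo, hhi, heq⟩ := (ddpath_support hdadj _ _ _).1 hmem
          have hgv : B = idx := by rw [hB, heq, gate_d hT hdinj hdadj]
          have hmin : B + 1 ≤ min (t m) ((n : ℕ) : ℤ) := le_min (by omega) (by omega)
          omega
    · by_cases hB' : ∀ K : ℤ, ∀ N : ℕ, ∃ m, N ≤ m ∧ t m ≤ K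
      · -- gates have liminf -∞ : S converges to the end of Rm
        right
        intro v
        set B := gate hT d v with hB
        obtain ⟨N₁, hN₁⟩ := htail S v
        obtain ⟨m, hm, hmB⟩ := hB' (B - 1) N₁
        set n : ℕ := (max (-(t m)) (1 - B)).toNat with hn
        have hn1 : -(t m) ≤ (n : ℤ) := le_trans (le_max_left _ _) (Int.self_le_toNat _)
        have hn2 : 1 - B ≤ (n : ℤ) := le_trans (le_max_right _ _) (Int.self_le_toNat _)
        refine ⟨m, n, fun i hi => hN₁ i (le_trans hm hi), ?_, ?_⟩
        · intro j hj hjv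
          rw [hRm j] at hjv
          have hgv : B = -(j : ℤ) := by rw [hB, ← hjv, gate_d hT hdinj hdadj]
          have hj' : (n : ℤ) ≤ (j : ℤ) := by exact_mod_cast hj
          omega
        · refine ⟨((gpath hT d (S.f m)).append (ddpath hdadj (t m) (-((n : ℕ) : ℤ)))).copy rfl (hRm n).symm, ?_⟩
          rw [Walk.support_copy, Walk.mem_support_append_iff]
          rintro (hmem | hmem)
          · have hgv := gate_of_mem_gpath hT hdinj hdadj hmem
            rw [← hB] at hgv
            have hgv2 : B = t m := hgv
            omega
          · obtain ⟨idx, hlo, hhi, heq⟩ := (ddpath_support hdadj _ _ _).1 hmem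
            have hgv : B = idx := by rw [hB, heq, gate_d hT hdinj hdadj]
            have hmax : max (t m) (-((n : ℕ) : ℤ)) ≤ B - 1 := max_le (by omega) (by omega)
            omega
      · -- gates eventually constant : contradiction with the fixed end
        exfalso
        push_neg at hA hB'
        obtain ⟨K₁, N₁, hK₁⟩ := hA
        obtain ⟨K₂, N₂, hK₂⟩ := hB'
        set N₀ := max N₁ N₂ with hN₀
        have hchange : ∀ n, N₀ ≤ n → t n ≠ t (n + 1) →
            S.f n = d (t n) ∧ S.f (n + 1) = d (t (n + 1)) := by
          intro n _ hne'
          rcases gate_adj hT hdinj hdadj (S.adj n) with h | h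
          · exact absurd h hne'
          · exact h
        have hfin : {n : ℕ | N₀ ≤ n ∧ t n ≠ t (n + 1)}.Finite := by
          have hmap : Set.InjOn t {n : ℕ | N₀ ≤ n ∧ t n ≠ t (n + 1)} := by
            intro a ha b hb hab
            have h1 := (hchange a ha.1 ha.2).1
            have h2 := (hchange b hb.1 hb.2).1
            exact S.inj (by rw [h1, h2, hab])
          refine Set.Finite.of_finite_image ?_ hmap
          refine (Set.finite_Icc K₂ K₁).subset ?_
          rintro z ⟨nn, ⟨hnn1, _⟩, rfl⟩
          exact ⟨le_of_lt (hK₂ nn (le_trans (le_max_right _ _) hnn1)),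
            le_of_lt (hK₁ nn (le_trans (le_max_left _ _) hnn1))⟩
        obtain ⟨M₀, hM₀⟩ := hfin.bddAbove
        set M := max (M₀ + 1) N₀ with hMdef
        have hconst : ∀ k : ℕ, t (M + k) = t M := by
          intro k
          induction k with
          | zero => rfl
          | succ k ih =>
            by_cases hne' : t (M + k) = t (M + k + 1)
            · rw [show M + (k + 1) = M + k + 1 by ring, ← hne', ih]
            · exfalso
              have hNM : N₀ ≤ M := le_max_right _ _
              have hmem : M + k ∈ {n : ℕ | N₀ ≤ n ∧ t n ≠ t (n + 1)} :=
                ⟨le_trans hNM (Nat.le_add_right _ _), hne'⟩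
              have h5 := hM₀ hmem
              have hMlb : M₀ + 1 ≤ M := le_max_left _ _
              omega
        have hconst' : ∀ nn : ℕ, M ≤ nn → t nn = t M := by
          intro nn h
          obtain ⟨k, rfl⟩ := Nat.exists_eq_add_of_le h
          exact hconst k
        set τ := t M with hτ
        have hconst'' : ∀ nn : ℕ, M ≤ nn → gate hT d (S.f nn) = τ := hconst'
        have hS'gate : ∀ nn : ℕ, M ≤ nn → gate hT d (S'.f nn) = τ + c := by
          intro nn h
          rw [hS'f nn, hgate_g, hconst'' nn h]
        obtain ⟨m, n, h1, h2, w, hw⟩ := hS'equiv (d τ)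
        set M1 := max m M with hM1def
        set N1 := max n M with hN1def
        -- walk along S' from index m to M1
        have hadj1 : ∀ i : ℕ, G.Adj (S'.f (m + i)) (S'.f (m + (i + 1))) := by
          intro i
          rw [show m + (i + 1) = (m + i) + 1 by ring]
          exact S'.adj (m + i)
        have hadj2 : ∀ i : ℕ, G.Adj (S.f (n + i)) (S.f (n + (i + 1))) := by
          intro i
          rw [show n + (i + 1) = (n + i) + 1 by ring]
          exact S.adj (n + i)
        set w1 : G.Walk (S'.f m) (S'.f M1) :=
          (chainWalk (fun i => S'.f (m + i)) hadj1 (M1 - m)).copy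
            (congrArg S'.f (by omega)) (congrArg S'.f (by omega)) with hw1
        set w2 : G.Walk (S.f n) (S.f N1) :=
          (chainWalk (fun i => S.f (n + i)) hadj2 (N1 - n)).copy
            (congrArg S.f (by omega)) (congrArg S.f (by omega)) with hw2
        set W : G.Walk (S'.f M1) (S.f N1) := w1.reverse.append (w.append w2) with hW
        have hWav : d τ ∉ W.support := by
          rw [hW, Walk.mem_support_append_iff, Walk.support_reverse, List.mem_reverse,
            Walk.mem_support_append_iff]
          rintro (hmem | hmem | hmem)
          · rw [hw1, Walk.support_copy] at hmem
            obtain ⟨i, _, heq⟩ := (chainWalk_support _ hadj1 _ _).1 hmem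
            exact h1 (m + i) (by omega) heq.symm
          · exact hw hmem
          · rw [hw2, Walk.support_copy] at hmem
            obtain ⟨i, _, heq⟩ := (chainWalk_support _ hadj2 _ _).1 hmem
            exact h2 (n + i) (by omega) heq.symm
        have hgne : gate hT d (S.f N1) ≠ gate hT d (S'.f M1) := by
          rw [hS'gate M1 (le_max_right _ _)]
          have : gate hT d (S.f N1) = τ := hconst'' N1 (le_max_right _ _)
          rw [this]
          omega
        have hsep := mem_tpath_of_gate_ne hT hdinj hdadj hgne
        have hτeq : d (gate hT d (S.f N1)) = d τ :=
          congrArg d (hconst'' N1 (le_max_right _ _))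
        rw [hτeq] at hsep
        have hsub := tpath_support_subset hT W.reverse hsep
        rw [Walk.support_reverse, List.mem_reverse] at hsub
        exact hWav hsub
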